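/- Commutation of conditional rewriting with parallel beta: for a semi-closed, left-linear, right-applicative conditional system R, ←β* ; →A* ⊆ →A* ; ←β* (the reflexive-transitive closures of →A and →β commute). -/

import Mathlib

namespace CondConf

/-- Untyped lambda-terms with constants from `F`, in de Bruijn notation. -/
inductive Tm (F : Type) : Type
  | const : F → Tm F
  | var   : ℕ → Tm F
  | app   : Tm F → Tm F → Tm F
  | lam   : Tm F → Tm F

namespace Tm

variable {F : Type}

/-- Lift (shift) free de Bruijn indices `≥ d` by one. -/
def lift (d : ℕ) : Tm F → Tm F
  | const f => const f
  | var n   => if n < d then var n else var (n + 1)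
  | app s t => app (lift d s) (lift d t)
  | lam s   => lam (lift (d + 1) s)

/-- Capture-avoiding substitution `t[k := u]` (de Bruijn). -/
def subst : Tm F → ℕ → Tm F → Tm F
  | const f, _, _ => const f
  | var n, k, u   => if n = k then u else if k < n then var (n - 1) else var n
  | app s t, k, u => app (subst s k u) (subst t k u)
  | lam s, k, u   => lam (subst s (k + 1) (lift 0 u))

end Tm

/-- Capture-avoiding application of a substitution `σ` to a term. -/
def applySubst {F : Type} (σ : ℕ → Tm F) : Tm F → Tm F
  | .const f => .const f
  | .var n   => σ n
  | .app s t => .app (applySubst σ s) (applySubst σ t)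
  | .lam s   => .lam (applySubst (fun n => match n with
      | 0 => Tm.var 0
      | m + 1 => Tm.lift 0 (σ m)) s)

/-- One-step beta-reduction. -/
inductive Beta {F : Type} : Tm F → Tm F → Prop
  | beta (s t : Tm F) : Beta (Tm.app (Tm.lam s) t) (Tm.subst s 0 t)
  | appL {s s'} (t) : Beta s s' → Beta (Tm.app s t) (Tm.app s' t)
  | appR (s) {t t'} : Beta t t' → Beta (Tm.app s t) (Tm.app s t')
  | lam {s s'} : Beta s s' → Beta (Tm.lam s) (Tm.lam s')

/-- Tait–Martin-Löf parallel beta-reduction. -/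
inductive PB {F : Type} : Tm F → Tm F → Prop
  | refl (t : Tm F) : PB t t
  | lam {s s'} : PB s s' → PB (Tm.lam s) (Tm.lam s')
  | app {s s' t t'} : PB s s' → PB t t' → PB (Tm.app s t) (Tm.app s' t')
  | beta {s s' t t'} : PB s s' → PB t t' →
      PB (Tm.app (Tm.lam s) t) (Tm.subst s' 0 t')


/-- Algebraic terms: no abstraction and no applied variable. -/
inductive Alg {F : Type} : Tm F → Prop
  | const (f : F) : Alg (Tm.const f)
  | var (n : ℕ) : Alg (Tm.var n)
  | app {s t} : Alg s → Alg t → (∀ n : ℕ, s ≠ Tm.var n) → Alg (Tm.app s t)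

/-- A conditional rewrite rule `d⃗ = c⃗ ⊃ l → r`. -/
structure Rule (F : Type) where
  lhs : Tm F
  rhs : Tm F
  conds : List (Tm F × Tm F)

/-- Joinability for a relation: `a ↓ b` iff `a →* c ←* b` for some `c`. -/
def Joinable {α : Type*} (r : α → α → Prop) (a b : α) : Prop :=
  ∃ c : α, Relation.ReflTransGen r a c ∧ Relation.ReflTransGen r b c

/-- Closure of a relation under the term formation rules (contexts). -/
inductive Ctx {F : Type} (base : Tm F → Tm F → Prop) : Tm F → Tm F → Prop
  | base {s t} : base s t → Ctx base s t
  | appL {s s'} (t) : Ctx base s s' → Ctx base (Tm.app s t) (Tm.app s' t)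
  | appR (s) {t t'} : Ctx base t t' → Ctx base (Tm.app s t) (Tm.app s t')
  | lam {s s'} : Ctx base s s' → Ctx base (Tm.lam s) (Tm.lam s')

/-- Root rewrite steps: rule instances whose instantiated conditions are
joinable for the relation `prev`. -/
def Aroot {F : Type} (R : Set (Rule F)) (prev : Tm F → Tm F → Prop)
    (s t : Tm F) : Prop :=
  ∃ ru ∈ R, ∃ σ : ℕ → Tm F,
    s = applySubst σ ru.lhs ∧ t = applySubst σ ru.rhs ∧
    ∀ dc ∈ ru.conds, Joinable prev (applySubst σ dc.1) (applySubst σ dc.2)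

/-- The level-`i` standard conditional rewrite relation `→_{A_i}`
(`→_{A_0} = ∅`, conditions at level `i+1` checked by `→_{A_i}`-joinability). -/
def Alevel {F : Type} (R : Set (Rule F)) : ℕ → Tm F → Tm F → Prop
  | 0 => fun _ _ => False
  | i + 1 => Ctx (Aroot R (Alevel R i))

/-- The nested parallel conditional rewrite relation `⇒_{A_i}`: smallest
reflexive parallel relation closed under abstraction, parallel application and
the rule `lσ ⇒_{A_i} rτ` whenever `lσ →_{A_i} rσ` and `σ ⇒_{A_i} τ`. -/
inductive APar {F : Type} (R : Set (Rule F)) (i : ℕ) : Tm F → Tm F → Prop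
  | refl (t : Tm F) : APar R i t t
  | app {s s' t t'} : APar R i s s' → APar R i t t' →
      APar R i (Tm.app s t) (Tm.app s' t')
  | lam {s s'} : APar R i s s' → APar R i (Tm.lam s) (Tm.lam s')
  | rule {ru : Rule F} {σ τ : ℕ → Tm F} : ru ∈ R →
      Alevel R i (applySubst σ ru.lhs) (applySubst σ ru.rhs) →
      (∀ n : ℕ, APar R i (σ n) (τ n)) →
      APar R i (applySubst σ ru.lhs) (applySubst τ ru.rhs)

/-- Applicative terms: no abstraction. -/
def Applicative {F : Type} : Tm F → Prop
  | .const _ => True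
  | .var _ => True
  | .app s t => Applicative s ∧ Applicative t
  | .lam _ => False

/-- Number of occurrences of the free variable (de Bruijn index) `n`. -/
def fvCount {F : Type} : Tm F → ℕ → ℕ
  | .const _, _ => 0
  | .var m, n => if m = n then 1 else 0
  | .app s t, n => fvCount s n + fvCount t n
  | .lam s, n => fvCount s (n + 1)

/-- Linear terms: every free variable occurs at most once. -/
def Linear {F : Type} (t : Tm F) : Prop := ∀ n : ℕ, fvCount t n ≤ 1

/-- Closed terms: no free variable. -/
def Closed {F : Type} (t : Tm F) : Prop := ∀ n : ℕ, fvCount t n = 0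

/-- A semi-closed, left-linear, right-applicative conditional rewrite system:
left-hand sides are non-variable linear algebraic terms, right-hand sides are
applicative, the `cᵢ` are closed algebraic terms, and all free variables of
`d⃗, c⃗, r` occur in `l`. -/
def SemiClosedLLRA {F : Type} (R : Set (Rule F)) : Prop :=
  ∀ ru ∈ R,
    Alg ru.lhs ∧ (∀ n : ℕ, ru.lhs ≠ Tm.var n) ∧ Linear ru.lhs ∧
    Applicative ru.rhs ∧
    (∀ dc ∈ ru.conds, Alg dc.2 ∧ Closed dc.2) ∧
    (∀ n : ℕ, 0 < fvCount ru.rhs n → 0 < fvCount ru.lhs n) ∧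
    (∀ dc ∈ ru.conds, ∀ n : ℕ,
      0 < fvCount dc.1 n + fvCount dc.2 n → 0 < fvCount ru.lhs n)

/-- The standard conditional rewrite relation `→_A = ∪ᵢ →_{A_i}`. -/
def ARel {F : Type} (R : Set (Rule F)) (s t : Tm F) : Prop :=
  ∃ i : ℕ, Alevel R i s t

section Lemmas
open Tm Relation
variable {F : Type}

theorem lift_lift (t : Tm F) : ∀ e d, e ≤ d →
    Tm.lift e (Tm.lift d t) = Tm.lift (d+1) (Tm.lift e t) := by
  induction t with
  | const f => intros; rfl
  | var n =>
      intro e d h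
      simp only [Tm.lift]
      split_ifs <;> simp only [Tm.lift] <;> split_ifs <;>
        first | rfl | (simp only [Tm.var.injEq]; omega) | omega
  | app s t ihs iht => intro e d h; simp only [Tm.lift, ihs _ _ h, iht _ _ h]
  | lam s ih => intro e d h; simp only [Tm.lift, ih (e+1) (d+1) (by omega)]

theorem lift_subst (s : Tm F) : ∀ k d (u : Tm F), k ≤ d →
    Tm.lift d (Tm.subst s k u) = Tm.subst (Tm.lift (d+1) s) k (Tm.lift d u) := by
  induction s with
  | const f => intros; rfl
  | var n =>
      intro k d u h
      simp only [Tm.subst, Tm.lift]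
      split_ifs <;> simp only [Tm.subst, Tm.lift] <;> split_ifs <;>
        first | rfl | (simp only [Tm.var.injEq]; omega) | omega
  | app a b iha ihb => intro k d u h; simp only [Tm.subst, Tm.lift, iha _ _ _ h, ihb _ _ _ h]
  | lam a ih =>
      intro k d u h
      simp only [Tm.subst, Tm.lift, ih (k+1) (d+1) (Tm.lift 0 u) (by omega)]
      rw [lift_lift u 0 d (by omega)]

theorem subst_lift (t : Tm F) : ∀ e k (u : Tm F), e ≤ k →
    Tm.subst (Tm.lift e t) (k+1) (Tm.lift e u) = Tm.lift e (Tm.subst t k u) := by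
  induction t with
  | const f => intros; rfl
  | var n =>
      intro e k u h
      simp only [Tm.subst, Tm.lift]
      split_ifs <;> simp only [Tm.subst, Tm.lift] <;> split_ifs <;>
        first | rfl | (simp only [Tm.var.injEq]; omega) | omega
  | app a b iha ihb => intro e k u h; simp only [Tm.subst, Tm.lift, iha _ _ _ h, ihb _ _ _ h]
  | lam a ih =>
      intro e k u h
      simp only [Tm.subst, Tm.lift]
      rw [lift_lift u 0 e (by omega), ih (e+1) (k+1) (Tm.lift 0 u) (by omega)]

theorem applySubst_agree (t : Tm F) : ∀ σ τ : ℕ → Tm F,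
    (∀ n, 0 < fvCount t n → σ n = τ n) → applySubst σ t = applySubst τ t := by
  induction t with
  | const f => intros; rfl
  | var n => intro σ τ h; exact h n (by simp [fvCount])
  | app a b iha ihb =>
      intro σ τ h
      simp only [applySubst]
      rw [iha σ τ (fun n hn => h n (by simp [fvCount]; omega)),
          ihb σ τ (fun n hn => h n (by simp [fvCount]; omega))]
  | lam a ih =>
      intro σ τ h
      simp only [applySubst]
      congr 1
      apply ih
      intro n hn
      match n with
      | 0 => rfl
      | m+1 =>
          show Tm.lift 0 (σ m) = Tm.lift 0 (τ m)
          rw [h m (by simpa [fvCount] using hn)]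

theorem lift_applySubst (t : Tm F) : ∀ (σ : ℕ → Tm F) d,
    Tm.lift d (applySubst σ t) = applySubst (fun n => Tm.lift d (σ n)) t := by
  induction t with
  | const f => intros; rfl
  | var n => intros; rfl
  | app a b iha ihb => intro σ d; simp only [applySubst, Tm.lift, iha, ihb]
  | lam a ih =>
      intro σ d
      simp only [applySubst, Tm.lift, ih]
      congr 1
      apply applySubst_agree
      intro n _
      match n with
      | 0 => show Tm.lift (d+1) (Tm.var 0) = Tm.var 0; simp [Tm.lift]
      | m+1 =>
          show Tm.lift (d+1) (Tm.lift 0 (σ m)) = Tm.lift 0 (Tm.lift d (σ m))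
          exact (lift_lift (σ m) 0 d (by omega)).symm

theorem subst_applySubst (t : Tm F) : ∀ (σ : ℕ → Tm F) k u,
    Tm.subst (applySubst σ t) k u = applySubst (fun n => Tm.subst (σ n) k u) t := by
  induction t with
  | const f => intros; rfl
  | var n => intros; rfl
  | app a b iha ihb => intro σ k u; simp only [applySubst, Tm.subst, iha, ihb]
  | lam a ih =>
      intro σ k u
      simp only [applySubst, Tm.subst, ih]
      congr 1
      apply applySubst_agree
      intro n _
      match n with
      | 0 => show Tm.subst (Tm.var 0) (k+1) (Tm.lift 0 u) = Tm.var 0; simp [Tm.subst]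
      | m+1 =>
          show Tm.subst (Tm.lift 0 (σ m)) (k+1) (Tm.lift 0 u) = Tm.lift 0 (Tm.subst (σ m) k u)
          exact subst_lift (σ m) 0 k u (by omega)

theorem pb_lift {s t : Tm F} (h : PB s t) : ∀ d, PB (Tm.lift d s) (Tm.lift d t) := by
  induction h with
  | refl t => intro d; exact PB.refl _
  | lam _ ih => intro d; exact PB.lam (ih (d+1))
  | app _ _ ihs iht => intro d; exact PB.app (ihs d) (iht d)
  | @beta s s' t t' _ _ ihs iht =>
      intro d
      have : Tm.lift d (Tm.subst s' 0 t') = Tm.subst (Tm.lift (d+1) s') 0 (Tm.lift d t') :=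
        lift_subst s' 0 d t' (by omega)
      rw [Tm.lift, this]
      exact PB.beta (ihs (d+1)) (iht d)

theorem pb_applySubst (t : Tm F) : ∀ σ τ : ℕ → Tm F,
    (∀ n, PB (σ n) (τ n)) → PB (applySubst σ t) (applySubst τ t) := by
  induction t with
  | const f => intros; exact PB.refl _
  | var n => intro σ τ h; exact h n
  | app a b iha ihb => intro σ τ h; exact PB.app (iha _ _ h) (ihb _ _ h)
  | lam a ih =>
      intro σ τ h
      refine PB.lam (ih _ _ ?_)
      intro n
      match n with
      | 0 => exact PB.refl _
      | m+1 => exact pb_lift (h m) 0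

end Lemmas
section Lemmas2
open Tm Relation
variable {F : Type}

theorem alg_applicative {t : Tm F} (h : Alg t) : Applicative t := by
  induction h with
  | const f => trivial
  | var n => trivial
  | app _ _ _ iha ihb => exact ⟨iha, ihb⟩

theorem applicative_applySubst {t : Tm F} : ∀ σ : ℕ → Tm F, Applicative t →
    (∀ n, 0 < fvCount t n → Applicative (σ n)) → Applicative (applySubst σ t) := by
  induction t with
  | const f => intros; trivial
  | var n => intro σ _ h; exact h n (by simp [fvCount])
  | app a b iha ihb =>
      intro σ ht h
      exact ⟨iha σ ht.1 (fun n hn => h n (by simp only [fvCount]; omega)),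
             ihb σ ht.2 (fun n hn => h n (by simp only [fvCount]; omega))⟩
  | lam a _ => intro σ ht _; exact absurd ht (by simp [Applicative])

theorem applicative_extract {l : Tm F} (hA : Alg l) : ∀ σ : ℕ → Tm F,
    Applicative (applySubst σ l) → ∀ n, 0 < fvCount l n → Applicative (σ n) := by
  induction hA with
  | const f => intro σ _ n hn; simp [fvCount] at hn
  | var m =>
      intro σ h n hn
      have : m = n := by by_contra hc; simp [fvCount, hc] at hn
      subst this; exact h
  | @app p q _ _ _ iha ihb =>
      intro σ h n hn
      simp only [fvCount] at hn
      by_cases h1 : 0 < fvCount p n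
      · exact iha σ h.1 n h1
      · exact ihb σ h.2 n (by omega)

theorem closed_applySubst {c : Tm F} (hA : Alg c) (hc : Closed c) (σ : ℕ → Tm F) :
    applySubst σ c = c := by
  induction hA with
  | const f => rfl
  | var n => exact absurd (hc n) (by simp [fvCount])
  | @app p q ha hb _ iha ihb =>
      have h1 : Closed p := fun n => by have := hc n; simp only [fvCount] at this; omega
      have h2 : Closed q := fun n => by have := hc n; simp only [fvCount] at this; omega
      simp only [applySubst, iha h1, ihb h2]

theorem pb_applicative_eq {e u : Tm F} (h : PB e u) (he : Applicative e) : u = e := by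
  induction h with
  | refl t => rfl
  | lam _ _ => exact absurd he (by simp [Applicative])
  | app _ _ iha ihb => rw [iha he.1, ihb he.2]
  | beta _ _ _ _ => exact absurd he.1 (by simp [Applicative])

theorem applySubst_ne_lam {l : Tm F} (hA : Alg l) (hnv : ∀ n, l ≠ Tm.var n)
    (σ : ℕ → Tm F) (x : Tm F) : applySubst σ l ≠ Tm.lam x := by
  cases hA with
  | const f => simp [applySubst]
  | var n => exact absurd rfl (hnv n)
  | app _ _ _ => simp [applySubst]

/-- map a reflexive transitive closure through a relation morphism -/
theorem joinable_map {α β : Type*} {r : α → α → Prop} {p : β → β → Prop} (f : α → β)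
    (hf : ∀ a b, r a b → p (f a) (f b)) {a b : α} (h : Joinable r a b) :
    Joinable p (f a) (f b) := by
  obtain ⟨c, h1, h2⟩ := h
  exact ⟨f c, h1.lift f hf, h2.lift f hf⟩

theorem alevel_lift {R : Set (Rule F)} : ∀ i {s t : Tm F}, Alevel R i s t →
    ∀ d, Alevel R i (Tm.lift d s) (Tm.lift d t) := by
  intro i
  induction i with
  | zero => intro s t h; exact h.elim
  | succ i ih =>
      intro s t h
      induction h with
      | base hb =>
          intro d
          obtain ⟨ru, hru, σ, hl, hr, hc⟩ := hb
          refine Ctx.base ⟨ru, hru, fun n => Tm.lift d (σ n), ?_, ?_, ?_⟩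
          · rw [hl, lift_applySubst]
          · rw [hr, lift_applySubst]
          · intro dc hdc
            rw [← lift_applySubst, ← lift_applySubst]
            exact joinable_map (fun x => Tm.lift d x) (fun a b hab => ih hab d) (hc dc hdc)
      | appL t _ ihs => intro d; exact Ctx.appL _ (ihs d)
      | appR s _ iht => intro d; exact Ctx.appR _ (iht d)
      | lam _ ihs => intro d; exact Ctx.lam (ihs (d+1))

theorem alevel_subst {R : Set (Rule F)} : ∀ i {s t : Tm F}, Alevel R i s t →
    ∀ k (u : Tm F), Alevel R i (Tm.subst s k u) (Tm.subst t k u) := by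
  intro i
  induction i with
  | zero => intro s t h; exact h.elim
  | succ i ih =>
      intro s t h
      induction h with
      | base hb =>
          intro k u
          obtain ⟨ru, hru, σ, hl, hr, hc⟩ := hb
          refine Ctx.base ⟨ru, hru, fun n => Tm.subst (σ n) k u, ?_, ?_, ?_⟩
          · rw [hl, subst_applySubst]
          · rw [hr, subst_applySubst]
          · intro dc hdc
            rw [← subst_applySubst, ← subst_applySubst]
            exact joinable_map (fun x => Tm.subst x k u) (fun a b hab => ih hab k u) (hc dc hdc)
      | appL t _ ihs => intro k u; exact Ctx.appL _ (ihs k u)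
      | appR s _ iht => intro k u; exact Ctx.appR _ (iht k u)
      | lam _ ihs => intro k u; exact Ctx.lam (ihs (k+1) (Tm.lift 0 u))

theorem applicative_alevel {R : Set (Rule F)} (hR : SemiClosedLLRA R) :
    ∀ i {s t : Tm F}, Alevel R i s t → Applicative s → Applicative t := by
  intro i
  induction i with
  | zero => intro s t h; exact h.elim
  | succ i _ =>
      intro s t h
      induction h with
      | base hb =>
          intro hs
          obtain ⟨ru, hru, σ, hl, hr, _⟩ := hb
          obtain ⟨hAlg, _, _, happ, _, hfv, _⟩ := hR ru hru
          subst hl hr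
          exact applicative_applySubst σ happ
            (fun n hn => applicative_extract hAlg σ hs n (hfv n hn))
      | appL t _ ihs => intro hs; exact ⟨ihs hs.1, hs.2⟩
      | appR s _ iht => intro hs; exact ⟨hs.1, iht hs.2⟩
      | lam _ _ => intro hs; exact absurd hs (by simp [Applicative])

theorem applicative_alevel_rtg {R : Set (Rule F)} (hR : SemiClosedLLRA R) {i : ℕ}
    {s t : Tm F} (h : Relation.ReflTransGen (Alevel R i) s t) (hs : Applicative s) :
    Applicative t := by
  induction h with
  | refl => exact hs
  | tail _ h2 ih => exact applicative_alevel hR i h2 ih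

theorem alevel_lam_inv {R : Set (Rule F)} (hR : SemiClosedLLRA R) {i : ℕ}
    {a t : Tm F} (h : Alevel R i (Tm.lam a) t) :
    ∃ a', t = Tm.lam a' ∧ Alevel R i a a' := by
  match i with
  | 0 => exact h.elim
  | i+1 =>
    cases h with
    | base hb =>
        obtain ⟨ru, hru, σ, hl, _, _⟩ := hb
        obtain ⟨hAlg, hnv, _⟩ := hR ru hru
        exact absurd hl.symm (applySubst_ne_lam hAlg hnv σ a)
    | lam hs => exact ⟨_, rfl, hs⟩

theorem rtg_lam_inv {R : Set (Rule F)} (hR : SemiClosedLLRA R) {i : ℕ}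
    {a v : Tm F} (h : Relation.ReflTransGen (Alevel R i) (Tm.lam a) v) :
    ∃ w, v = Tm.lam w ∧ Relation.ReflTransGen (Alevel R i) a w := by
  induction h with
  | refl => exact ⟨a, rfl, Relation.ReflTransGen.refl⟩
  | tail _ h2 ih =>
      obtain ⟨w, rfl, hw⟩ := ih
      obtain ⟨w', rfl, hw'⟩ := alevel_lam_inv hR h2
      exact ⟨w', rfl, hw.tail hw'⟩

theorem rtg_appL {B : Tm F → Tm F → Prop} {a a' : Tm F} (t : Tm F)
    (h : Relation.ReflTransGen (Ctx B) a a') :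
    Relation.ReflTransGen (Ctx B) (Tm.app a t) (Tm.app a' t) :=
  h.lift (fun x => Tm.app x t) (fun _ _ hab => Ctx.appL t hab)

theorem rtg_appR {B : Tm F → Tm F → Prop} (s : Tm F) {t t' : Tm F}
    (h : Relation.ReflTransGen (Ctx B) t t') :
    Relation.ReflTransGen (Ctx B) (Tm.app s t) (Tm.app s t') :=
  h.lift (fun x => Tm.app s x) (fun _ _ hab => Ctx.appR s hab)

theorem rtg_lam {B : Tm F → Tm F → Prop} {s s' : Tm F}
    (h : Relation.ReflTransGen (Ctx B) s s') :
    Relation.ReflTransGen (Ctx B) (Tm.lam s) (Tm.lam s') :=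
  h.lift Tm.lam (fun _ _ hab => Ctx.lam hab)

theorem rtg_subst_right {R : Set (Rule F)} {i : ℕ} (a : Tm F) : ∀ k {x y : Tm F},
    Alevel R i x y →
    Relation.ReflTransGen (Alevel R i) (Tm.subst a k x) (Tm.subst a k y) := by
  match i with
  | 0 => intro k x y h; exact h.elim
  | i+1 =>
    induction a with
    | const f => intros; exact Relation.ReflTransGen.refl
    | var n =>
        intro k x y h
        simp only [Tm.subst]
        split_ifs
        · exact Relation.ReflTransGen.single h
        · exact Relation.ReflTransGen.refl
        · exact Relation.ReflTransGen.refl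
    | app p q ihp ihq =>
        intro k x y h
        simp only [Tm.subst]
        exact (rtg_appL _ (ihp k h)).trans (rtg_appR _ (ihq k h))
    | lam p ihp =>
        intro k x y h
        simp only [Tm.subst]
        exact rtg_lam (ihp (k+1) (alevel_lift (i+1) h 0))

theorem rtg_subst_right' {R : Set (Rule F)} {i : ℕ} (a : Tm F) {k : ℕ} {x y : Tm F}
    (h : Relation.ReflTransGen (Alevel R i) x y) :
    Relation.ReflTransGen (Alevel R i) (Tm.subst a k x) (Tm.subst a k y) := by
  induction h with
  | refl => exact Relation.ReflTransGen.refl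
  | tail _ h2 ih => exact ih.trans (rtg_subst_right a k h2)

theorem rtg_subst_left {R : Set (Rule F)} {i : ℕ} {x y : Tm F} (k : ℕ) (u : Tm F)
    (h : Relation.ReflTransGen (Alevel R i) x y) :
    Relation.ReflTransGen (Alevel R i) (Tm.subst x k u) (Tm.subst y k u) :=
  h.lift (fun z => Tm.subst z k u) (fun _ _ hab => alevel_subst i hab k u)

end Lemmas2
section Lemmas3
open Tm Relation
variable {F : Type}

theorem pb_const_inv {f : F} {u : Tm F} (h : PB (Tm.const f) u) : u = Tm.const f := by
  cases h; rfl

theorem pb_lam_inv {s u : Tm F} (h : PB (Tm.lam s) u) :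
    ∃ s', u = Tm.lam s' ∧ PB s s' := by
  cases h with
  | refl => exact ⟨s, rfl, PB.refl s⟩
  | lam hs => exact ⟨_, rfl, hs⟩

theorem pb_app_inv {a b u : Tm F} (hn : ∀ x, a ≠ Tm.lam x) (h : PB (Tm.app a b) u) :
    ∃ a' b', u = Tm.app a' b' ∧ PB a a' ∧ PB b b' := by
  cases h with
  | refl => exact ⟨a, b, rfl, PB.refl a, PB.refl b⟩
  | app ha hb => exact ⟨_, _, rfl, ha, hb⟩
  | beta _ _ => exact absurd rfl (hn _)

theorem linear_app {a b : Tm F} (h : Linear (Tm.app a b)) :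
    Linear a ∧ Linear b ∧ ∀ n, fvCount a n = 0 ∨ fvCount b n = 0 := by
  refine ⟨fun n => ?_, fun n => ?_, fun n => ?_⟩ <;>
    (have := h n; simp only [fvCount] at this; omega)

theorem pb_decompose {l : Tm F} (hA : Alg l) : ∀ (σ : ℕ → Tm F) (u : Tm F),
    Linear l → PB (applySubst σ l) u →
    ∃ τ : ℕ → Tm F, u = applySubst τ l ∧ (∀ n, PB (σ n) (τ n)) ∧
      (∀ n, fvCount l n = 0 → τ n = σ n) := by
  induction hA with
  | const f =>
      intro σ u _ h
      rw [pb_const_inv h]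
      exact ⟨σ, rfl, fun n => PB.refl _, fun n _ => rfl⟩
  | var m =>
      intro σ u _ h
      refine ⟨fun n => if n = m then u else σ n, by simp [applySubst], fun n => ?_, fun n hn => ?_⟩
      · by_cases hnm : n = m
        · subst hnm; simpa [applySubst] using h
        · simp [hnm]; exact PB.refl _
      · have : n ≠ m := by intro he; subst he; simp [fvCount] at hn
        simp [this]
  | @app l1 l2 hA1 hA2 hnv ih1 ih2 =>
      intro σ u hlin h
      obtain ⟨hl1, hl2, hdisj⟩ := linear_app hlin
      have hne : ∀ x, applySubst σ l1 ≠ Tm.lam x := applySubst_ne_lam hA1 hnv σ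
      obtain ⟨a', b', rfl, ha, hb⟩ := pb_app_inv hne h
      obtain ⟨τ1, rfl, hpb1, heq1⟩ := ih1 σ a' hl1 ha
      obtain ⟨τ2, rfl, hpb2, heq2⟩ := ih2 σ b' hl2 hb
      refine ⟨fun n => if 0 < fvCount l1 n then τ1 n else τ2 n, ?_, fun n => ?_, fun n hn => ?_⟩
      · simp only [applySubst]
        congr 1
        · exact (applySubst_agree l1 _ _ (fun n hn => by simp [hn])).symm
        · refine (applySubst_agree l2 _ _ (fun n hn => ?_)).symm
          have : ¬ 0 < fvCount l1 n := by rcases hdisj n with h' | h' <;> omega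
          simp [this]
      · by_cases h1 : 0 < fvCount l1 n
        · simpa [h1] using hpb1 n
        · simpa [h1] using hpb2 n
      · simp only [fvCount] at hn
        have h1 : fvCount l1 n = 0 := by omega
        have h2 : fvCount l2 n = 0 := by omega
        simp [h1, heq2 n h2]

end Lemmas3
section Lemmas4
open Tm Relation
variable {F : Type}

theorem comm_level {R : Set (Rule F)} (hR : SemiClosedLLRA R) :
    ∀ i {s t u : Tm F}, Alevel R i s t → PB s u →
    ∃ v, Relation.ReflTransGen (Alevel R i) u v ∧ PB t v := by
  intro i
  induction i with
  | zero => intro s t u h; exact h.elim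
  | succ i ih =>
      have ihStar : ∀ {s t u : Tm F}, Relation.ReflTransGen (Alevel R i) s t → PB s u →
          ∃ v, Relation.ReflTransGen (Alevel R i) u v ∧ PB t v := by
        intro s t u h
        induction h generalizing u with
        | refl => intro hpb; exact ⟨u, Relation.ReflTransGen.refl, hpb⟩
        | tail h1 h2 ih2 =>
            intro hpb
            obtain ⟨v', hv1, hv2⟩ := ih2 hpb
            obtain ⟨v, hw1, hw2⟩ := ih h2 hv2
            exact ⟨v, hv1.trans hw1, hw2⟩
      intro s t u h
      have h' : Ctx (Aroot R (Alevel R i)) s t := h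
      clear h
      revert u
      induction h' with
      | @base s t hb =>
          intro u hpb
          obtain ⟨ru, hru, σ, rfl, rfl, hcond⟩ := hb
          obtain ⟨hAlg, hnv, hlin, happ, hconds, hfvr, hfvc⟩ := hR ru hru
          obtain ⟨τ, rfl, hpbστ, -⟩ := pb_decompose hAlg σ u hlin hpb
          refine ⟨applySubst τ ru.rhs, Relation.ReflTransGen.single ?_,
            pb_applySubst ru.rhs σ τ hpbστ⟩
          refine Ctx.base ⟨ru, hru, τ, rfl, rfl, ?_⟩
          intro dc hdc
          obtain ⟨hcalg, hcclosed⟩ := hconds dc hdc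
          obtain ⟨e, h1, h2⟩ := hcond dc hdc
          rw [closed_applySubst hcalg hcclosed σ] at h2
          have hpbd : PB (applySubst σ dc.1) (applySubst τ dc.1) :=
            pb_applySubst dc.1 σ τ hpbστ
          obtain ⟨e', he1, hpe⟩ := ihStar h1 hpbd
          have happE : Applicative e :=
            applicative_alevel_rtg hR h2 (alg_applicative hcalg)
          rw [pb_applicative_eq hpe happE] at he1
          rw [closed_applySubst hcalg hcclosed τ]
          exact ⟨e, he1, h2⟩
      | @appL a a' b hC ihC =>
          intro u hpb
          cases hpb with
          | refl =>
              exact ⟨Tm.app a' b,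
                Relation.ReflTransGen.single (show Alevel R (i+1) _ _ from Ctx.appL b hC),
                PB.refl _⟩
          | app ha hb2 =>
              obtain ⟨v1, hv1, hpv1⟩ := ihC ha
              exact ⟨Tm.app v1 _, rtg_appL _ hv1, PB.app hpv1 hb2⟩
          | @beta a0 s0' _ b0' ha hb2 =>
              obtain ⟨a0', rfl, hC0⟩ :=
                alevel_lam_inv hR (show Alevel R (i+1) _ _ from hC)
              obtain ⟨v0, hv0, hpv0⟩ := ihC (PB.lam ha)
              obtain ⟨w, rfl, hw⟩ := rtg_lam_inv hR hv0
              obtain ⟨w', hwe, hpw⟩ := pb_lam_inv hpv0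
              have hww : w' = w := by injection hwe.symm
              rw [hww] at hpw
              exact ⟨Tm.subst w 0 b0', rtg_subst_left 0 b0' hw, PB.beta hpw hb2⟩
      | @appR a b b' hC ihC =>
          intro u hpb
          cases hpb with
          | refl =>
              exact ⟨Tm.app a b',
                Relation.ReflTransGen.single (show Alevel R (i+1) _ _ from Ctx.appR a hC),
                PB.refl _⟩
          | app ha hb2 =>
              obtain ⟨v2, hv2, hpv2⟩ := ihC hb2
              exact ⟨Tm.app _ v2, rtg_appR _ hv2, PB.app ha hpv2⟩
          | beta ha hb2 =>
              obtain ⟨v2, hv2, hpv2⟩ := ihC hb2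
              refine ⟨Tm.subst _ 0 v2, rtg_subst_right' _ hv2, PB.beta ha hpv2⟩
      | @lam x x' hC ihC =>
          intro u hpb
          cases hpb with
          | refl =>
              exact ⟨Tm.lam x',
                Relation.ReflTransGen.single (show Alevel R (i+1) _ _ from Ctx.lam hC),
                PB.refl _⟩
          | lam hs =>
              obtain ⟨v0, hv0, hp⟩ := ihC hs
              exact ⟨Tm.lam v0, rtg_lam hv0, PB.lam hp⟩

end Lemmas4
section Lemmas5
open Tm Relation
variable {F : Type}

theorem beta_pb {s t : Tm F} (h : Beta s t) : PB s t := by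
  induction h with
  | beta s t => exact PB.beta (PB.refl s) (PB.refl t)
  | appL t _ ih => exact PB.app ih (PB.refl t)
  | appR s _ ih => exact PB.app (PB.refl s) ih
  | lam _ ih => exact PB.lam ih

theorem rtg_beta_appL {a a' : Tm F} (t : Tm F) (h : Relation.ReflTransGen Beta a a') :
    Relation.ReflTransGen Beta (Tm.app a t) (Tm.app a' t) :=
  h.lift (fun x => Tm.app x t) (fun _ _ hab => Beta.appL t hab)

theorem rtg_beta_appR (s : Tm F) {t t' : Tm F} (h : Relation.ReflTransGen Beta t t') :
    Relation.ReflTransGen Beta (Tm.app s t) (Tm.app s t') :=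
  h.lift (fun x => Tm.app s x) (fun _ _ hab => Beta.appR s hab)

theorem rtg_beta_lam {s s' : Tm F} (h : Relation.ReflTransGen Beta s s') :
    Relation.ReflTransGen Beta (Tm.lam s) (Tm.lam s') :=
  h.lift Tm.lam (fun _ _ hab => Beta.lam hab)

theorem pb_beta_star {s t : Tm F} (h : PB s t) : Relation.ReflTransGen Beta s t := by
  induction h with
  | refl t => exact Relation.ReflTransGen.refl
  | lam _ ih => exact rtg_beta_lam ih
  | app _ _ iha ihb => exact (rtg_beta_appL _ iha).trans (rtg_beta_appR _ ihb)
  | @beta s s' t t' _ _ ihs iht =>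
      exact (((rtg_beta_appL t (rtg_beta_lam ihs)).trans
        (rtg_beta_appR (Tm.lam s') iht)).tail (Beta.beta s' t'))

theorem comm_arel_pb {R : Set (Rule F)} (hR : SemiClosedLLRA R) {s t u : Tm F}
    (ha : Relation.ReflTransGen (ARel R) s t) (hpb : PB s u) :
    ∃ v, Relation.ReflTransGen (ARel R) u v ∧ PB t v := by
  induction ha with
  | refl => exact ⟨u, Relation.ReflTransGen.refl, hpb⟩
  | tail h1 h2 ih =>
      obtain ⟨v', hv1, hv2⟩ := ih
      obtain ⟨i, hstep⟩ := h2
      obtain ⟨v, hw1, hw2⟩ := comm_level hR i hstep hv2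
      exact ⟨v, hv1.trans (hw1.lift id (fun a b hab => ⟨i, hab⟩)), hw2⟩

end Lemmas5
/-- for a semi-closed, left-linear, right-applicative conditional
system, `→A*` and `→β*` commute: `←β* ; →A* ⊆ →A* ; ←β*`. -/
theorem aStar_commutes_betaStar {F : Type} (R : Set (Rule F))
    (hR : SemiClosedLLRA R) {s t u : Tm F}
    (hb : Relation.ReflTransGen Beta s u)
    (ha : Relation.ReflTransGen (ARel R) s t) :
    ∃ v : Tm F, Relation.ReflTransGen (ARel R) u v ∧
      Relation.ReflTransGen Beta t v := by
  induction hb with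
  | refl => exact ⟨t, ha, Relation.ReflTransGen.refl⟩
  | tail h1 h2 ih =>
      obtain ⟨v', hv1, hv2⟩ := ih
      obtain ⟨v, hw1, hw2⟩ := comm_arel_pb hR hv1 (beta_pb h2)
      exact ⟨v, hw1, hv2.trans (pb_beta_star hw2)⟩

end CondConf
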